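/- Assume the unknown-input Weierstrass decomposition, unknown-input historical data, and unknown-input persistent excitation hypotheses, and assume the fast subsystem is controllable with the augmented input, i.e. the matrix Q' = [B2, F2, R·B2, R·F2, …, R^{s−1}·B2, R^{s−1}·F2] ∈ ℝ^{n2×(s·(m+q))} has rank n2. Then the (n+p) × (n+q) block matrix [[E, F], [C, 0]] has rank n + q if and only if rank col(X_p, U_p, Y_f) = n + m + q. -/

import Mathlib

open Matrix

noncomputable section

/-- Data matrix of depth `T` whose `k`-th column is `f (k + off)`. -/
def histMat {ι : Type} (T : ℕ) (f : ℕ → ι → ℝ) (off : ℕ) : Matrix ι (Fin T) ℝ :=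
  Matrix.of fun i k => f ((k : ℕ) + off) i

/-- A real square matrix is Schur stable if every complex eigenvalue has modulus `< 1`. -/
def SchurStable {n : ℕ} (M : Matrix (Fin n) (Fin n) ℝ) : Prop :=
  ∀ μ ∈ spectrum ℂ (M.map (fun r : ℝ => (r : ℂ))), ‖μ‖ < 1

/-- View a real matrix as a complex matrix. -/
def cmap {a b : Type} (M : Matrix a b ℝ) : Matrix a b ℂ := M.map (fun r => (r : ℂ))

namespace Stmt18Aux

variable {n1 n2 s m p q : ℕ}

/-- splice a pair of vectors into a `Fin (n1+n2)` vector -/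
def glue (a : Fin n1 → ℝ) (b : Fin n2 → ℝ) : Fin (n1 + n2) → ℝ :=
  fun i => Sum.elim a b (finSumFinEquiv.symm i)

lemma glue_inl (a : Fin n1 → ℝ) (b : Fin n2 → ℝ) (j : Fin n1) :
    glue a b (finSumFinEquiv (Sum.inl j)) = a j := by simp [glue]

lemma glue_inr (a : Fin n1 → ℝ) (b : Fin n2 → ℝ) (j : Fin n2) :
    glue a b (finSumFinEquiv (Sum.inr j)) = b j := by simp [glue]

lemma glue_self (y : Fin (n1 + n2) → ℝ) :
    glue (fun i => y (finSumFinEquiv (Sum.inl i))) (fun i => y (finSumFinEquiv (Sum.inr i))) = y := by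
  funext i
  show Sum.elim _ _ (finSumFinEquiv.symm i) = y i
  conv_rhs => rw [← finSumFinEquiv.apply_symm_apply i]
  rcases finSumFinEquiv.symm i with j | j <;> rfl

lemma glue_zero : glue (0 : Fin n1 → ℝ) (0 : Fin n2 → ℝ) = 0 := by
  funext i
  show Sum.elim _ _ (finSumFinEquiv.symm i) = 0
  rcases finSumFinEquiv.symm i with j | j <;> rfl

lemma glue_add (a a' : Fin n1 → ℝ) (b b' : Fin n2 → ℝ) :
    glue (a + a') (b + b') = glue a b + glue a' b' := by
  funext i
  simp only [glue, Pi.add_apply]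
  cases hx : finSumFinEquiv.symm i <;> simp

lemma glue_eq_zero {a : Fin n1 → ℝ} {b : Fin n2 → ℝ} (h : glue a b = 0) : a = 0 ∧ b = 0 := by
  constructor
  · funext j; have := congrFun h (finSumFinEquiv (Sum.inl j)); rwa [glue_inl] at this
  · funext j; have := congrFun h (finSumFinEquiv (Sum.inr j)); rwa [glue_inr] at this

lemma mulVec_glue_blocks {M : Matrix (Fin (n1 + n2)) (Fin (n1 + n2)) ℝ}
    {M1 : Matrix (Fin n1) (Fin n1) ℝ} {M2 : Matrix (Fin n2) (Fin n2) ℝ}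
    (h : M.submatrix ⇑finSumFinEquiv ⇑finSumFinEquiv = fromBlocks M1 0 0 M2)
    (a : Fin n1 → ℝ) (b : Fin n2 → ℝ) :
    M *ᵥ glue a b = glue (M1 *ᵥ a) (M2 *ᵥ b) := by
  have h2 := congrArg (fun N => N *ᵥ Sum.elim a b) h
  simp only [submatrix_mulVec_equiv, fromBlocks_mulVec, Sum.elim_comp_inl, Sum.elim_comp_inr,
    zero_mulVec, add_zero, zero_add] at h2
  funext i
  have h3 := congrFun h2 (finSumFinEquiv.symm i)
  simp only [Function.comp_apply, Equiv.apply_symm_apply] at h3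
  show (M *ᵥ glue a b) i = Sum.elim _ _ (finSumFinEquiv.symm i)
  rw [← h3]
  rfl

lemma mulVec_glue_cols {M : Matrix (Fin p) (Fin (n1 + n2)) ℝ}
    {M1 : Matrix (Fin p) (Fin n1) ℝ} {M2 : Matrix (Fin p) (Fin n2) ℝ}
    (h : M.submatrix id ⇑finSumFinEquiv = fromCols M1 M2)
    (a : Fin n1 → ℝ) (b : Fin n2 → ℝ) :
    M *ᵥ glue a b = M1 *ᵥ a + M2 *ᵥ b := by
  have h2 := congrArg (fun N => N *ᵥ Sum.elim a b) h
  simp only [submatrix_mulVec_equiv, fromCols_mulVec_sumElim] at h2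
  rw [← h2]
  rfl

lemma mulVec_rows {r : ℕ} {M : Matrix (Fin (n1 + n2)) (Fin r) ℝ}
    {M1 : Matrix (Fin n1) (Fin r) ℝ} {M2 : Matrix (Fin n2) (Fin r) ℝ}
    (h : M.submatrix ⇑finSumFinEquiv id = fromRows M1 M2)
    (v : Fin r → ℝ) :
    M *ᵥ v = glue (M1 *ᵥ v) (M2 *ᵥ v) := by
  have h2 := congrArg (fun N => N *ᵥ v) h
  simp only [fromRows_mulVec] at h2
  funext i
  have h3 := congrFun h2 (finSumFinEquiv.symm i)
  show _ = Sum.elim _ _ (finSumFinEquiv.symm i)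
  rw [← h3]
  show (M *ᵥ v) i = (M *ᵥ v) (finSumFinEquiv (finSumFinEquiv.symm i))
  rw [Equiv.apply_symm_apply]

lemma mulVec_sumF {a b γ : Type*} [Fintype b] (M : Matrix a b ℝ) (t : Finset γ) (f : γ → b → ℝ) :
    M *ᵥ (∑ j ∈ t, f j) = ∑ j ∈ t, M *ᵥ f j := by
  simpa only [Matrix.mulVecLin_apply] using map_sum M.mulVecLin f t

lemma master (hs : 1 ≤ s) (R : Matrix (Fin n2) (Fin n2) ℝ) (hR : R ^ s = 0)
    (X : ℕ → Fin n2 → ℝ) :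
    ∑ j ∈ Finset.range s, R ^ j *ᵥ X j
      = X 0 + R *ᵥ ∑ j ∈ Finset.range s, R ^ j *ᵥ X (j + 1) := by
  obtain ⟨t, rfl⟩ : ∃ t, s = t + 1 := ⟨s - 1, by omega⟩
  rw [Finset.sum_range_succ' (fun j => R ^ j *ᵥ X j) t]
  rw [Finset.sum_range_succ (fun j => R ^ j *ᵥ X (j + 1)) t]
  rw [mulVec_add, mulVec_sumF]
  have h1 : ∀ j, R *ᵥ (R ^ j *ᵥ X (j + 1)) = R ^ (j + 1) *ᵥ X (j + 1) := by
    intro j; rw [mulVec_mulVec, ← pow_succ']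
  simp only [h1]
  rw [hR, zero_mulVec, add_zero, pow_zero, one_mulVec, add_comm]


/-- selection with out-of-range giving 0 -/
def csel {s' : ℕ} (c : (Fin s' × (Fin m ⊕ Fin q)) → ℝ) (j : ℕ) : (Fin m ⊕ Fin q) → ℝ :=
  fun l => if h : j < s' then c (⟨j, h⟩, l) else 0

def Xv (B2 : Matrix (Fin n2) (Fin m) ℝ) (F2 : Matrix (Fin n2) (Fin q) ℝ)
    (v : (Fin m ⊕ Fin q) → ℝ) : Fin n2 → ℝ :=
  B2 *ᵥ (fun i => v (Sum.inl i)) + F2 *ᵥ (fun i => v (Sum.inr i))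

lemma Xv_zero (B2 : Matrix (Fin n2) (Fin m) ℝ) (F2 : Matrix (Fin n2) (Fin q) ℝ) :
    Xv B2 F2 0 = 0 := by
  show B2 *ᵥ 0 + F2 *ᵥ 0 = 0
  simp

lemma Xv_add (B2 : Matrix (Fin n2) (Fin m) ℝ) (F2 : Matrix (Fin n2) (Fin q) ℝ)
    (v v' : (Fin m ⊕ Fin q) → ℝ) :
    Xv B2 F2 (v + v') = Xv B2 F2 v + Xv B2 F2 v' := by
  show B2 *ᵥ ((fun i => v (Sum.inl i)) + (fun i => v' (Sum.inl i)))
      + F2 *ᵥ ((fun i => v (Sum.inr i)) + (fun i => v' (Sum.inr i))) = _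
  rw [mulVec_add, mulVec_add]
  show _ = (B2 *ᵥ _ + F2 *ᵥ _) + (B2 *ᵥ _ + F2 *ᵥ _)
  abel

lemma Xv_smul (B2 : Matrix (Fin n2) (Fin m) ℝ) (F2 : Matrix (Fin n2) (Fin q) ℝ)
    (r : ℝ) (v : (Fin m ⊕ Fin q) → ℝ) :
    Xv B2 F2 (r • v) = r • Xv B2 F2 v := by
  show B2 *ᵥ (r • fun i => v (Sum.inl i)) + F2 *ᵥ (r • fun i => v (Sum.inr i)) = _
  rw [mulVec_smul, mulVec_smul]
  show _ = r • (B2 *ᵥ _ + F2 *ᵥ _)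
  rw [smul_add]

lemma Xv_elim (B2 : Matrix (Fin n2) (Fin m) ℝ) (F2 : Matrix (Fin n2) (Fin q) ℝ)
    (u : Fin m → ℝ) (e : Fin q → ℝ) :
    Xv B2 F2 (Sum.elim u e) = B2 *ᵥ u + F2 *ᵥ e := rfl

/-- the `j`-th augmented-input slice of a `w`-vector -/
def wv (s : ℕ) (w : (Fin n1 ⊕ (Fin (s + 1) × (Fin m ⊕ Fin q))) → ℝ) (j : ℕ) :
    (Fin m ⊕ Fin q) → ℝ :=
  csel (fun jl => w (Sum.inr jl)) j

lemma wv_add (w w' : (Fin n1 ⊕ (Fin (s + 1) × (Fin m ⊕ Fin q))) → ℝ) (j : ℕ) :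
    wv s (w + w') j = wv s w j + wv s w' j := by
  funext l
  simp only [wv, csel, Pi.add_apply]
  split <;> simp

lemma wv_smul (r : ℝ) (w : (Fin n1 ⊕ (Fin (s + 1) × (Fin m ⊕ Fin q))) → ℝ) (j : ℕ) :
    wv s (r • w) j = r • wv s w j := by
  funext l
  simp only [wv, csel, Pi.smul_apply]
  split <;> simp

def psiX (P : Matrix (Fin (n1 + n2)) (Fin (n1 + n2)) ℝ) (R : Matrix (Fin n2) (Fin n2) ℝ)
    (B2 : Matrix (Fin n2) (Fin m) ℝ) (F2 : Matrix (Fin n2) (Fin q) ℝ)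
    (w : (Fin n1 ⊕ (Fin (s + 1) × (Fin m ⊕ Fin q))) → ℝ) : Fin (n1 + n2) → ℝ :=
  P *ᵥ glue (fun i => w (Sum.inl i))
    (-(∑ j ∈ Finset.range s, R ^ j *ᵥ Xv B2 F2 (wv s w j)))

def psiU (s : ℕ) (w : (Fin n1 ⊕ (Fin (s + 1) × (Fin m ⊕ Fin q))) → ℝ) : Fin m → ℝ :=
  fun i => wv s w 0 (Sum.inl i)

def psiY (A1 : Matrix (Fin n1) (Fin n1) ℝ) (R : Matrix (Fin n2) (Fin n2) ℝ)
    (B1 : Matrix (Fin n1) (Fin m) ℝ) (B2 : Matrix (Fin n2) (Fin m) ℝ)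
    (F1 : Matrix (Fin n1) (Fin q) ℝ) (F2 : Matrix (Fin n2) (Fin q) ℝ)
    (C1 : Matrix (Fin p) (Fin n1) ℝ) (C2 : Matrix (Fin p) (Fin n2) ℝ)
    (w : (Fin n1 ⊕ (Fin (s + 1) × (Fin m ⊕ Fin q))) → ℝ) : Fin p → ℝ :=
  C1 *ᵥ (A1 *ᵥ (fun i => w (Sum.inl i)) + B1 *ᵥ psiU s w
      + F1 *ᵥ (fun i => wv s w 0 (Sum.inr i)))
    + C2 *ᵥ (-(∑ j ∈ Finset.range s, R ^ j *ᵥ Xv B2 F2 (wv s w (j + 1))))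

def psiFun (P : Matrix (Fin (n1 + n2)) (Fin (n1 + n2)) ℝ) (A1 : Matrix (Fin n1) (Fin n1) ℝ)
    (R : Matrix (Fin n2) (Fin n2) ℝ)
    (B1 : Matrix (Fin n1) (Fin m) ℝ) (B2 : Matrix (Fin n2) (Fin m) ℝ)
    (F1 : Matrix (Fin n1) (Fin q) ℝ) (F2 : Matrix (Fin n2) (Fin q) ℝ)
    (C1 : Matrix (Fin p) (Fin n1) ℝ) (C2 : Matrix (Fin p) (Fin n2) ℝ)
    (w : (Fin n1 ⊕ (Fin (s + 1) × (Fin m ⊕ Fin q))) → ℝ) :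
    (Fin (n1 + n2) ⊕ (Fin m ⊕ Fin p)) → ℝ :=
  Sum.elim (psiX P R B2 F2 w) (Sum.elim (psiU s w) (psiY A1 R B1 B2 F1 F2 C1 C2 w))

lemma psiX_add (P : Matrix (Fin (n1 + n2)) (Fin (n1 + n2)) ℝ) (R : Matrix (Fin n2) (Fin n2) ℝ)
    (B2 : Matrix (Fin n2) (Fin m) ℝ) (F2 : Matrix (Fin n2) (Fin q) ℝ)
    (w w' : (Fin n1 ⊕ (Fin (s + 1) × (Fin m ⊕ Fin q))) → ℝ) :
    psiX P R B2 F2 (w + w') = psiX P R B2 F2 w + psiX P R B2 F2 w' := by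
  unfold psiX
  have hz : (fun i => (w + w') (Sum.inl i))
      = (fun i => w (Sum.inl i)) + (fun i => w' (Sum.inl i)) := rfl
  rw [hz]
  simp only [wv_add, Xv_add, mulVec_add, Finset.sum_add_distrib, neg_add, glue_add]

lemma psiX_smul (P : Matrix (Fin (n1 + n2)) (Fin (n1 + n2)) ℝ) (R : Matrix (Fin n2) (Fin n2) ℝ)
    (B2 : Matrix (Fin n2) (Fin m) ℝ) (F2 : Matrix (Fin n2) (Fin q) ℝ)
    (r : ℝ) (w : (Fin n1 ⊕ (Fin (s + 1) × (Fin m ⊕ Fin q))) → ℝ) :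
    psiX P R B2 F2 (r • w) = r • psiX P R B2 F2 w := by
  unfold psiX
  have hz : (fun i => (r • w) (Sum.inl i)) = r • (fun i => w (Sum.inl i)) := rfl
  rw [hz]
  have hglue : ∀ (a : Fin n1 → ℝ) (b : Fin n2 → ℝ), glue (r • a) (r • b) = r • glue a b := by
    intro a b; funext i
    simp only [glue, Pi.smul_apply]
    cases hx : finSumFinEquiv.symm i <;> simp
  simp only [wv_smul, Xv_smul, mulVec_smul, ← Finset.smul_sum, ← smul_neg, hglue]

lemma psiU_add (w w' : (Fin n1 ⊕ (Fin (s + 1) × (Fin m ⊕ Fin q))) → ℝ) :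
    psiU s (w + w') = psiU s w + psiU s w' := by
  funext i; simp only [psiU, wv_add, Pi.add_apply]

lemma psiU_smul (r : ℝ) (w : (Fin n1 ⊕ (Fin (s + 1) × (Fin m ⊕ Fin q))) → ℝ) :
    psiU s (r • w) = r • psiU s w := by
  funext i; simp only [psiU, wv_smul, Pi.smul_apply]

lemma psiY_add (A1 : Matrix (Fin n1) (Fin n1) ℝ) (R : Matrix (Fin n2) (Fin n2) ℝ)
    (B1 : Matrix (Fin n1) (Fin m) ℝ) (B2 : Matrix (Fin n2) (Fin m) ℝ)
    (F1 : Matrix (Fin n1) (Fin q) ℝ) (F2 : Matrix (Fin n2) (Fin q) ℝ)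
    (C1 : Matrix (Fin p) (Fin n1) ℝ) (C2 : Matrix (Fin p) (Fin n2) ℝ)
    (w w' : (Fin n1 ⊕ (Fin (s + 1) × (Fin m ⊕ Fin q))) → ℝ) :
    psiY A1 R B1 B2 F1 F2 C1 C2 (w + w')
      = psiY A1 R B1 B2 F1 F2 C1 C2 w + psiY A1 R B1 B2 F1 F2 C1 C2 w' := by
  unfold psiY
  have hz : (fun i => (w + w') (Sum.inl i))
      = (fun i => w (Sum.inl i)) + (fun i => w' (Sum.inl i)) := rfl
  have he : (fun i => wv s (w + w') 0 (Sum.inr i))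
      = (fun i => wv s w 0 (Sum.inr i)) + (fun i => wv s w' 0 (Sum.inr i)) := by
    funext i; simp only [wv_add, Pi.add_apply]
  rw [hz, he, psiU_add]
  simp only [wv_add, Xv_add, mulVec_add, Finset.sum_add_distrib, neg_add]
  abel

lemma psiY_smul (A1 : Matrix (Fin n1) (Fin n1) ℝ) (R : Matrix (Fin n2) (Fin n2) ℝ)
    (B1 : Matrix (Fin n1) (Fin m) ℝ) (B2 : Matrix (Fin n2) (Fin m) ℝ)
    (F1 : Matrix (Fin n1) (Fin q) ℝ) (F2 : Matrix (Fin n2) (Fin q) ℝ)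
    (C1 : Matrix (Fin p) (Fin n1) ℝ) (C2 : Matrix (Fin p) (Fin n2) ℝ)
    (r : ℝ) (w : (Fin n1 ⊕ (Fin (s + 1) × (Fin m ⊕ Fin q))) → ℝ) :
    psiY A1 R B1 B2 F1 F2 C1 C2 (r • w) = r • psiY A1 R B1 B2 F1 F2 C1 C2 w := by
  unfold psiY
  have hz : (fun i => (r • w) (Sum.inl i)) = r • (fun i => w (Sum.inl i)) := rfl
  have he : (fun i => wv s (r • w) 0 (Sum.inr i))
      = r • (fun i => wv s w 0 (Sum.inr i)) := by
    funext i; simp only [wv_smul, Pi.smul_apply]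
  rw [hz, he, psiU_smul]
  simp only [wv_smul, Xv_smul, mulVec_smul, ← Finset.smul_sum, ← smul_neg, ← smul_add]

def psiMap (P : Matrix (Fin (n1 + n2)) (Fin (n1 + n2)) ℝ) (A1 : Matrix (Fin n1) (Fin n1) ℝ)
    (R : Matrix (Fin n2) (Fin n2) ℝ)
    (B1 : Matrix (Fin n1) (Fin m) ℝ) (B2 : Matrix (Fin n2) (Fin m) ℝ)
    (F1 : Matrix (Fin n1) (Fin q) ℝ) (F2 : Matrix (Fin n2) (Fin q) ℝ)
    (C1 : Matrix (Fin p) (Fin n1) ℝ) (C2 : Matrix (Fin p) (Fin n2) ℝ) :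
    ((Fin n1 ⊕ (Fin (s + 1) × (Fin m ⊕ Fin q))) → ℝ)
      →ₗ[ℝ] ((Fin (n1 + n2) ⊕ (Fin m ⊕ Fin p)) → ℝ) where
  toFun := psiFun P A1 R B1 B2 F1 F2 C1 C2
  map_add' w w' := by
    unfold psiFun
    rw [psiX_add, psiU_add, psiY_add]
    funext x
    rcases x with i | (i | i) <;> rfl
  map_smul' r w := by
    unfold psiFun
    rw [psiX_smul, psiU_smul, psiY_smul]
    funext x
    rcases x with i | (i | i) <;> rfl


def Qm (R : Matrix (Fin n2) (Fin n2) ℝ) (B2 : Matrix (Fin n2) (Fin m) ℝ)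
    (F2 : Matrix (Fin n2) (Fin q) ℝ) : Matrix (Fin n2) (Fin s × (Fin m ⊕ Fin q)) ℝ :=
  Matrix.of fun (i : Fin n2) (jl : Fin s × (Fin m ⊕ Fin q)) =>
    Sum.elim (fun l => (R ^ (jl.1 : ℕ) * B2) i l)
      (fun l => (R ^ (jl.1 : ℕ) * F2) i l) jl.2

lemma Qm_mulVec (R : Matrix (Fin n2) (Fin n2) ℝ) (B2 : Matrix (Fin n2) (Fin m) ℝ)
    (F2 : Matrix (Fin n2) (Fin q) ℝ) (c : (Fin s × (Fin m ⊕ Fin q)) → ℝ) :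
    Qm R B2 F2 *ᵥ c = ∑ j ∈ Finset.range s, R ^ j *ᵥ Xv B2 F2 (csel c j) := by
  funext i
  rw [Finset.sum_apply]
  rw [← Fin.sum_univ_eq_sum_range (fun j => (R ^ j *ᵥ Xv B2 F2 (csel c j)) i) s]
  show ∑ jl : Fin s × (Fin m ⊕ Fin q), Qm R B2 F2 i jl * c jl = _
  rw [Fintype.sum_prod_type]
  refine Finset.sum_congr rfl (fun j _ => ?_)
  have hc : csel c (j : ℕ) = fun l => c (j, l) := by
    funext l
    simp only [csel, j.isLt, dif_pos, Fin.eta]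
  rw [hc]
  rw [Fintype.sum_sum_type]
  have hXv : (R ^ (j : ℕ) *ᵥ Xv B2 F2 fun l => c (j, l)) i
      = ((R ^ (j : ℕ) * B2) *ᵥ (fun l => c (j, Sum.inl l))) i
        + ((R ^ (j : ℕ) * F2) *ᵥ (fun l => c (j, Sum.inr l))) i := by
    simp only [Xv, mulVec_add, ← mulVec_mulVec, Pi.add_apply]
  rw [hXv]
  congr 1 <;> rfl

/-- the shift embedding -/
def phiFun (n1 : ℕ) (c : (Fin s × (Fin m ⊕ Fin q)) → ℝ) :
    (Fin n1 ⊕ (Fin (s + 1) × (Fin m ⊕ Fin q))) → ℝ :=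
  Sum.elim 0 (fun jl =>
    if h : 1 ≤ (jl.1 : ℕ) then
      c (⟨(jl.1 : ℕ) - 1, by have := jl.1.isLt; omega⟩, jl.2) else 0)

lemma phi_apply_succ (c : (Fin s × (Fin m ⊕ Fin q)) → ℝ) (j : Fin s) (l : Fin m ⊕ Fin q) :
    phiFun n1 c (Sum.inr (j.succ, l)) = c (j, l) := by
  have h1 : 1 ≤ ((j.succ : Fin (s + 1)) : ℕ) := by simp [Fin.val_succ]
  unfold phiFun
  rw [Sum.elim_inr]
  rw [dif_pos h1]
  exact congrArg c (Prod.ext (Fin.ext (by simp [Fin.val_succ])) rfl)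


lemma phi_apply_zero (c : (Fin s × (Fin m ⊕ Fin q)) → ℝ) (l : Fin m ⊕ Fin q) :
    phiFun n1 c (Sum.inr (0, l)) = 0 := by
  unfold phiFun
  rw [Sum.elim_inr]
  rw [dif_neg]
  simp

lemma wv_phi_zero (c : (Fin s × (Fin m ⊕ Fin q)) → ℝ) :
    wv s (phiFun n1 c) 0 = 0 := by
  funext l
  simp [wv, csel, phiFun]

lemma wv_phi_succ (c : (Fin s × (Fin m ⊕ Fin q)) → ℝ) (j : ℕ) :
    wv s (phiFun n1 c) (j + 1) = csel c j := by
  funext l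
  by_cases hj : j < s
  · have h1 : j + 1 < s + 1 := by omega
    simp only [wv, csel, dif_pos hj, dif_pos h1, phiFun, Sum.elim_inr]
    rw [dif_pos (by simp : 1 ≤ ((⟨j + 1, h1⟩ : Fin (s + 1)) : ℕ))]
    exact congrArg c (Prod.ext (Fin.ext (by simp)) rfl)
  · have h1 : ¬ (j + 1 < s + 1) := by omega
    simp only [wv, csel, dif_neg hj, dif_neg h1]

lemma phiFun_add (c c' : (Fin s × (Fin m ⊕ Fin q)) → ℝ) :
    phiFun n1 (c + c') = phiFun n1 c + phiFun n1 c' := by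
  funext x
  rcases x with i | jl
  · show (0 : ℝ) = 0 + 0; simp
  · show (if h : _ then _ else _) = _
    by_cases h : 1 ≤ ((jl.1 : Fin (s+1)) : ℕ)
    · rw [dif_pos h]
      show _ = (if h : 1 ≤ ((jl.1 : Fin (s+1)) : ℕ) then c (⟨(jl.1 : ℕ) - 1, by have := jl.1.isLt; omega⟩, jl.2) else (0:ℝ)) + (if h : 1 ≤ ((jl.1 : Fin (s+1)) : ℕ) then c' (⟨(jl.1 : ℕ) - 1, by have := jl.1.isLt; omega⟩, jl.2) else (0:ℝ))
      rw [dif_pos h, dif_pos h]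
      rfl
    · rw [dif_neg h]
      show _ = (if h : 1 ≤ ((jl.1 : Fin (s+1)) : ℕ) then c (⟨(jl.1 : ℕ) - 1, by have := jl.1.isLt; omega⟩, jl.2) else (0:ℝ)) + (if h : 1 ≤ ((jl.1 : Fin (s+1)) : ℕ) then c' (⟨(jl.1 : ℕ) - 1, by have := jl.1.isLt; omega⟩, jl.2) else (0:ℝ))
      rw [dif_neg h, dif_neg h]
      simp

lemma phiFun_smul (r : ℝ) (c : (Fin s × (Fin m ⊕ Fin q)) → ℝ) :
    phiFun n1 (r • c) = r • phiFun n1 c := by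
  funext x
  rcases x with i | jl
  · show (0 : ℝ) = r • (0:ℝ); simp
  · show (if h : 1 ≤ ((jl.1 : Fin (s+1)) : ℕ) then (r • c) (⟨(jl.1 : ℕ) - 1, by have := jl.1.isLt; omega⟩, jl.2) else (0:ℝ)) = r • (if h : 1 ≤ ((jl.1 : Fin (s+1)) : ℕ) then c (⟨(jl.1 : ℕ) - 1, by have := jl.1.isLt; omega⟩, jl.2) else (0:ℝ))
    by_cases h : 1 ≤ ((jl.1 : Fin (s+1)) : ℕ)
    · rw [dif_pos h, dif_pos h]; rfl
    · rw [dif_neg h, dif_neg h]; simp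

def phiMap (n1 : ℕ) {s m q : ℕ} :
    ((Fin s × (Fin m ⊕ Fin q)) → ℝ) →ₗ[ℝ] ((Fin n1 ⊕ (Fin (s + 1) × (Fin m ⊕ Fin q))) → ℝ) where
  toFun := phiFun n1
  map_add' := phiFun_add
  map_smul' := phiFun_smul

lemma phiFun_injective : Function.Injective (phiFun (s := s) (m := m) (q := q) n1) := by
  intro c c' h
  funext jl
  obtain ⟨j, l⟩ := jl
  have := congrFun h (Sum.inr (j.succ, l))
  rwa [phi_apply_succ, phi_apply_succ] at this

lemma psi_phi (hs : 1 ≤ s)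
    (P : Matrix (Fin (n1 + n2)) (Fin (n1 + n2)) ℝ) (A1 : Matrix (Fin n1) (Fin n1) ℝ)
    (R : Matrix (Fin n2) (Fin n2) ℝ) (hR : R ^ s = 0)
    (B1 : Matrix (Fin n1) (Fin m) ℝ) (B2 : Matrix (Fin n2) (Fin m) ℝ)
    (F1 : Matrix (Fin n1) (Fin q) ℝ) (F2 : Matrix (Fin n2) (Fin q) ℝ)
    (C1 : Matrix (Fin p) (Fin n1) ℝ) (C2 : Matrix (Fin p) (Fin n2) ℝ)
    (c : (Fin s × (Fin m ⊕ Fin q)) → ℝ) :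
    psiFun P A1 R B1 B2 F1 F2 C1 C2 (phiFun n1 c)
      = Sum.elim (P *ᵥ glue 0 (-(R *ᵥ (Qm R B2 F2 *ᵥ c))))
          (Sum.elim 0 (C2 *ᵥ (-(Qm R B2 F2 *ᵥ c)))) := by
  have h1 : (fun i => phiFun (s := s) (m := m) (q := q) n1 c (Sum.inl i)) = (0 : Fin n1 → ℝ) := rfl
  have h2 : ∑ j ∈ Finset.range s, R ^ j *ᵥ Xv B2 F2 (wv s (phiFun n1 c) (j + 1))
      = Qm R B2 F2 *ᵥ c := by
    rw [Qm_mulVec]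
    exact Finset.sum_congr rfl fun j _ => by rw [wv_phi_succ]
  have h3 : ∑ j ∈ Finset.range s, R ^ j *ᵥ Xv B2 F2 (wv s (phiFun n1 c) j)
      = R *ᵥ (Qm R B2 F2 *ᵥ c) := by
    rw [master hs R hR (fun j => Xv B2 F2 (wv s (phiFun n1 c) j)), wv_phi_zero, Xv_zero,
      zero_add, h2]
  unfold psiFun psiX psiY psiU
  simp only [h1, h2, h3, wv_phi_zero]
  have hu : (fun i => (0 : (Fin m ⊕ Fin q) → ℝ) (Sum.inl i)) = (0 : Fin m → ℝ) := rfl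
  have he : (fun i => (0 : (Fin m ⊕ Fin q) → ℝ) (Sum.inr i)) = (0 : Fin q → ℝ) := rfl
  simp only [hu, he]
  funext x
  rcases x with i | (i | i)
  · rfl
  · rfl
  · simp

/-- the vector putting `-η` in the `η`-slot of time-slice `0` -/
def w0Fun (n1 s m : ℕ) {q : ℕ} (η : Fin q → ℝ) :
    (Fin n1 ⊕ (Fin (s + 1) × (Fin m ⊕ Fin q))) → ℝ :=
  Sum.elim 0 (fun jl => if jl.1 = 0 then Sum.elim 0 (-η) jl.2 else 0)

lemma wv_w0_zero (η : Fin q → ℝ) :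
    wv s (w0Fun n1 s m η) 0 = Sum.elim (0 : Fin m → ℝ) (-η) := by
  funext l
  have h0 : (0 : ℕ) < s + 1 := Nat.succ_pos s
  have hz : (⟨0, h0⟩ : Fin (s + 1)) = 0 := Fin.ext (by simp)
  simp only [wv, csel, dif_pos h0, w0Fun, Sum.elim_inr]
  rw [if_pos hz]

lemma wv_w0_succ (η : Fin q → ℝ) (j : ℕ) :
    wv s (w0Fun n1 s m η) (j + 1) = 0 := by
  funext l
  by_cases hj : j + 1 < s + 1
  · have hne : (⟨j + 1, hj⟩ : Fin (s + 1)) ≠ 0 := by simp [Fin.ext_iff]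
    simp only [wv, csel, dif_pos hj]
    show (if (⟨j + 1, hj⟩ : Fin (s + 1)) = 0 then Sum.elim (0 : Fin m → ℝ) (-η) l else 0)
      = (0 : ℝ)
    rw [if_neg hne]
  · simp only [wv, csel, dif_neg hj]
    rfl

lemma psi_w0 (hs : 1 ≤ s)
    (P : Matrix (Fin (n1 + n2)) (Fin (n1 + n2)) ℝ) (A1 : Matrix (Fin n1) (Fin n1) ℝ)
    (R : Matrix (Fin n2) (Fin n2) ℝ) (hR : R ^ s = 0)
    (B1 : Matrix (Fin n1) (Fin m) ℝ) (B2 : Matrix (Fin n2) (Fin m) ℝ)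
    (F1 : Matrix (Fin n1) (Fin q) ℝ) (F2 : Matrix (Fin n2) (Fin q) ℝ)
    (C1 : Matrix (Fin p) (Fin n1) ℝ) (C2 : Matrix (Fin p) (Fin n2) ℝ)
    (η : Fin q → ℝ) :
    psiFun P A1 R B1 B2 F1 F2 C1 C2 (w0Fun n1 s m η)
      = Sum.elim (P *ᵥ glue 0 (F2 *ᵥ η)) (Sum.elim 0 (-(C1 *ᵥ (F1 *ᵥ η)))) := by
  have h1 : (fun i => w0Fun n1 s m η (Sum.inl i)) = (0 : Fin n1 → ℝ) := rfl
  have h2 : ∑ j ∈ Finset.range s, R ^ j *ᵥ Xv B2 F2 (wv s (w0Fun n1 s m η) (j + 1)) = 0 := by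
    refine Finset.sum_eq_zero fun j _ => ?_
    rw [wv_w0_succ, Xv_zero, mulVec_zero]
  have h3 : ∑ j ∈ Finset.range s, R ^ j *ᵥ Xv B2 F2 (wv s (w0Fun n1 s m η) j)
      = -(F2 *ᵥ η) := by
    rw [master hs R hR (fun j => Xv B2 F2 (wv s (w0Fun n1 s m η) j)), wv_w0_zero]
    have : ∑ j ∈ Finset.range s, R ^ j *ᵥ Xv B2 F2 (wv s (w0Fun n1 s m η) (j + 1)) = 0 := h2
    rw [this, mulVec_zero, add_zero, Xv_elim, mulVec_zero, mulVec_neg, zero_add]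
  unfold psiFun psiX psiY psiU
  simp only [h1, h2, h3, wv_w0_zero, neg_neg]
  have hu : (fun i => Sum.elim (0 : Fin m → ℝ) (-η) (Sum.inl i)) = (0 : Fin m → ℝ) := rfl
  have he : (fun i => Sum.elim (0 : Fin m → ℝ) (-η) (Sum.inr i)) = -η := rfl
  simp only [hu, he]
  funext x
  rcases x with i | (i | i)
  · rfl
  · rfl
  · simp [mulVec_neg]

end Stmt18Aux

open Stmt18Aux Module in
theorem stmt_18 (n1 n2 s m p q T : ℕ) (hs : 1 ≤ s) (hT : 1 ≤ T)
    (E A : Matrix (Fin (n1 + n2)) (Fin (n1 + n2)) ℝ)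
    (B : Matrix (Fin (n1 + n2)) (Fin m) ℝ)
    (F : Matrix (Fin (n1 + n2)) (Fin q) ℝ) (hF : F.rank = q)
    (C : Matrix (Fin p) (Fin (n1 + n2)) ℝ)
    (S P : Matrix (Fin (n1 + n2)) (Fin (n1 + n2)) ℝ)
    (hS : IsUnit S) (hP : IsUnit P)
    (A1 : Matrix (Fin n1) (Fin n1) ℝ) (R : Matrix (Fin n2) (Fin n2) ℝ)
    (B1 : Matrix (Fin n1) (Fin m) ℝ) (B2 : Matrix (Fin n2) (Fin m) ℝ)
    (F1 : Matrix (Fin n1) (Fin q) ℝ) (F2 : Matrix (Fin n2) (Fin q) ℝ)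
    (C1 : Matrix (Fin p) (Fin n1) ℝ) (C2 : Matrix (Fin p) (Fin n2) ℝ)
    (hR : R ^ s = 0)
    (hE : (S * E * P).submatrix ⇑finSumFinEquiv ⇑finSumFinEquiv = Matrix.fromBlocks 1 0 0 R)
    (hA : (S * A * P).submatrix ⇑finSumFinEquiv ⇑finSumFinEquiv = Matrix.fromBlocks A1 0 0 1)
    (hB : (S * B).submatrix ⇑finSumFinEquiv id = Matrix.fromRows B1 B2)
    (hFdec : (S * F).submatrix ⇑finSumFinEquiv id = Matrix.fromRows F1 F2)
    (hC : (C * P).submatrix id ⇑finSumFinEquiv = Matrix.fromCols C1 C2)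
    (ud : ℕ → Fin m → ℝ) (etad : ℕ → Fin q → ℝ)
    (z1d : ℕ → Fin n1 → ℝ) (z2d : ℕ → Fin n2 → ℝ)
    (xd : ℕ → Fin (n1 + n2) → ℝ) (yd : ℕ → Fin p → ℝ)
    (hz1 : ∀ k < T, z1d (k + 1) = A1 *ᵥ z1d k + B1 *ᵥ ud k + F1 *ᵥ etad k)
    (hz2 : ∀ k ≤ T, z2d k
      = -(∑ j ∈ Finset.range s, (R ^ j *ᵥ (B2 *ᵥ ud (k + j) + F2 *ᵥ etad (k + j)))))
    (hxd : ∀ k ≤ T, xd k = P *ᵥ (fun i => Sum.elim (z1d k) (z2d k) (finSumFinEquiv.symm i)))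
    (hyd : ∀ k ≤ T, yd k = C *ᵥ xd k)
    (hPE : (Matrix.of fun (i : Fin n1 ⊕ (Fin (s + 1) × (Fin m ⊕ Fin q))) (k : Fin T) =>
        Sum.elim (z1d (k : ℕ))
          (fun jl => Sum.elim (ud ((k : ℕ) + (jl.1 : ℕ))) (etad ((k : ℕ) + (jl.1 : ℕ))) jl.2)
          i).rank = n1 + (s + 1) * (m + q))
    (hQ : (Matrix.of fun (i : Fin n2) (jl : Fin s × (Fin m ⊕ Fin q)) =>
      Sum.elim (fun l => (R ^ (jl.1 : ℕ) * B2) i l)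
        (fun l => (R ^ (jl.1 : ℕ) * F2) i l) jl.2).rank = n2) :
    (Matrix.fromBlocks E F C 0).rank = (n1 + n2) + q
      ↔ (Matrix.fromRows (histMat T xd 0)
          (Matrix.fromRows (histMat T ud 0) (histMat T yd 1))).rank
        = (n1 + n2) + m + q := by
  classical
  -- inverses
  obtain ⟨Si, hSi1, hSi2⟩ : ∃ Si, S * Si = 1 ∧ Si * S = 1 := by
    obtain ⟨u, hu⟩ := hS
    exact ⟨↑u⁻¹, by rw [← hu]; exact u.mul_inv, by rw [← hu]; exact u.inv_mul⟩
  obtain ⟨Pinv, hPi1, hPi2⟩ : ∃ Pinv, P * Pinv = 1 ∧ Pinv * P = 1 := by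
    obtain ⟨u, hu⟩ := hP
    exact ⟨↑u⁻¹, by rw [← hu]; exact u.mul_inv, by rw [← hu]; exact u.inv_mul⟩
  have hScan : ∀ y : Fin (n1 + n2) → ℝ, S *ᵥ y = 0 → y = 0 := by
    intro y hy
    have h2 : Si *ᵥ (S *ᵥ y) = y := by rw [mulVec_mulVec, hSi2, one_mulVec]
    rw [hy, mulVec_zero] at h2
    exact h2.symm
  have hPglue : ∀ (a : Fin n1 → ℝ) (b : Fin n2 → ℝ), P *ᵥ glue a b = 0 → a = 0 ∧ b = 0 := by
    intro a b h
    have h2 : Pinv *ᵥ (P *ᵥ glue a b) = glue a b := by rw [mulVec_mulVec, hPi2, one_mulVec]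
    rw [h, mulVec_zero] at h2
    exact glue_eq_zero h2.symm
  -- structural mulVec identities
  have hCv : ∀ (a : Fin n1 → ℝ) (b : Fin n2 → ℝ),
      C *ᵥ (P *ᵥ glue a b) = C1 *ᵥ a + C2 *ᵥ b := by
    intro a b
    rw [mulVec_mulVec]
    exact mulVec_glue_cols hC a b
  have hEv : ∀ (a : Fin n1 → ℝ) (b : Fin n2 → ℝ),
      S *ᵥ (E *ᵥ (P *ᵥ glue a b)) = glue a (R *ᵥ b) := by
    intro a b
    rw [mulVec_mulVec, mulVec_mulVec]
    have h2 := mulVec_glue_blocks hE a b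
    rwa [one_mulVec] at h2
  have hFv : ∀ η : Fin q → ℝ, S *ᵥ (F *ᵥ η) = glue (F1 *ᵥ η) (F2 *ᵥ η) := by
    intro η
    rw [mulVec_mulVec]
    exact mulVec_rows hFdec η
  -- the key property
  set Φ : Prop := ∀ (a : Fin n1 → ℝ) (b : Fin n2 → ℝ) (η : Fin q → ℝ),
      a + F1 *ᵥ η = 0 → R *ᵥ b + F2 *ᵥ η = 0 → C1 *ᵥ a + C2 *ᵥ b = 0 →
      a = 0 ∧ b = 0 ∧ η = 0 with hPhiDef
  -- ====== LHS ↔ Φ ======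
  have hLHS : (Matrix.fromBlocks E F C 0).rank = (n1 + n2) + q ↔ Φ := by
    have hrn : (Matrix.fromBlocks E F C 0).rank
        + finrank ℝ ↥(LinearMap.ker (Matrix.fromBlocks E F C 0).mulVecLin) = (n1 + n2) + q := by
      have h2 := (Matrix.fromBlocks E F C 0).mulVecLin.finrank_range_add_finrank_ker
      have h3 : (Matrix.fromBlocks E F C 0).rank
          = finrank ℝ ↥(LinearMap.range (Matrix.fromBlocks E F C 0).mulVecLin) := rfl
      rw [h3, h2, Module.finrank_pi]
      simp
    have hker : LinearMap.ker (Matrix.fromBlocks E F C 0).mulVecLin = ⊥ ↔ Φ := by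
      rw [Matrix.ker_mulVecLin_eq_bot_iff, hPhiDef]
      constructor
      · intro hinj a b η h1 h2 h3
        have hx : Matrix.fromBlocks E F C 0 *ᵥ Sum.elim (P *ᵥ glue a b) η = 0 := by
          rw [fromBlocks_mulVec]
          have hE0 : E *ᵥ ((Sum.elim (P *ᵥ glue a b) η) ∘ Sum.inl)
              + F *ᵥ ((Sum.elim (P *ᵥ glue a b) η) ∘ Sum.inr) = 0 := by
            show E *ᵥ (P *ᵥ glue a b) + F *ᵥ η = 0
            apply hScan
            rw [mulVec_add, hEv, hFv, ← glue_add, h1, h2, glue_zero]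
          have hC0 : C *ᵥ ((Sum.elim (P *ᵥ glue a b) η) ∘ Sum.inl)
              + (0 : Matrix (Fin p) (Fin q) ℝ) *ᵥ ((Sum.elim (P *ᵥ glue a b) η) ∘ Sum.inr)
              = 0 := by
            show C *ᵥ (P *ᵥ glue a b) + (0 : Matrix (Fin p) (Fin q) ℝ) *ᵥ η = 0
            rw [zero_mulVec, add_zero, hCv, h3]
          rw [hE0, hC0]
          funext x
          rcases x with i | i <;> rfl
        have h4 := hinj _ hx
        have hxa : P *ᵥ glue a b = 0 := funext fun i => congrFun h4 (Sum.inl i)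
        have hη : η = 0 := funext fun i => congrFun h4 (Sum.inr i)
        obtain ⟨ha, hb⟩ := hPglue a b hxa
        exact ⟨ha, hb, hη⟩
      · intro hPhi v hv
        have hv' : Matrix.fromBlocks E F C 0
            *ᵥ Sum.elim (fun i => v (Sum.inl i)) (fun i => v (Sum.inr i)) = 0 := by
          have h5 : Sum.elim (fun i => v (Sum.inl i)) (fun i => v (Sum.inr i)) = v := by
            funext x0; rcases x0 with i | i <;> rfl
          rw [h5]; exact hv
        rw [fromBlocks_mulVec] at hv'
        have h1 : E *ᵥ (fun i => v (Sum.inl i)) + F *ᵥ (fun i => v (Sum.inr i)) = 0 := by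
          funext i
          exact congrFun hv' (Sum.inl i)
        have h2 : C *ᵥ (fun i => v (Sum.inl i)) = 0 := by
          funext i
          have h6 := congrFun hv' (Sum.inr i)
          simp only [Sum.elim_inr, zero_mulVec, add_zero] at h6
          exact h6
        set x : Fin (n1 + n2) → ℝ := fun i => v (Sum.inl i) with hxdef
        set η : Fin q → ℝ := fun i => v (Sum.inr i) with hetadef
        set a : Fin n1 → ℝ := fun i => (Pinv *ᵥ x) (finSumFinEquiv (Sum.inl i)) with hadef
        set b : Fin n2 → ℝ := fun i => (Pinv *ᵥ x) (finSumFinEquiv (Sum.inr i)) with hbdef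
        have hxab : P *ᵥ glue a b = x := by
          rw [hadef, hbdef, glue_self (Pinv *ᵥ x), mulVec_mulVec, hPi1, one_mulVec]
        have hS1 : glue (a + F1 *ᵥ η) (R *ᵥ b + F2 *ᵥ η) = 0 := by
          rw [glue_add, ← hEv a b, ← hFv η, ← mulVec_add, hxab, h1, mulVec_zero]
        obtain ⟨hg1, hg2⟩ := glue_eq_zero hS1
        have h3 : C1 *ᵥ a + C2 *ᵥ b = 0 := by rw [← hCv, hxab, h2]
        obtain ⟨ha, hb, hη⟩ := hPhi a b η hg1 hg2 h3
        have hx0 : x = 0 := by rw [← hxab, ha, hb, glue_zero, mulVec_zero]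
        funext x0
        rcases x0 with i | i
        · exact congrFun hx0 i
        · exact congrFun hη i
    constructor
    · intro hrank
      rw [← hker]
      have h0 : finrank ℝ ↥(LinearMap.ker (Matrix.fromBlocks E F C 0).mulVecLin) = 0 := by omega
      exact Submodule.finrank_eq_zero.mp h0
    · intro hPhi
      have hbot := hker.mpr hPhi
      have hz : finrank ℝ ↥(LinearMap.ker (Matrix.fromBlocks E F C 0).mulVecLin) = 0 := by
        have h42 := congrArg (fun (Sub : Submodule ℝ (Fin (n1 + n2) ⊕ Fin q → ℝ)) =>
          finrank ℝ ↥Sub) hbot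
        simpa using h42
      omega
  -- ====== RHS setup ======
  rw [hLHS]
  set W : Matrix (Fin n1 ⊕ (Fin (s + 1) × (Fin m ⊕ Fin q))) (Fin T) ℝ :=
    Matrix.of fun (i : Fin n1 ⊕ (Fin (s + 1) × (Fin m ⊕ Fin q))) (k : Fin T) =>
      Sum.elim (z1d (k : ℕ))
        (fun jl => Sum.elim (ud ((k : ℕ) + (jl.1 : ℕ))) (etad ((k : ℕ) + (jl.1 : ℕ))) jl.2)
        i with hWdef
  set M : Matrix (Fin (n1 + n2) ⊕ (Fin m ⊕ Fin p)) (Fin T) ℝ :=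
    Matrix.fromRows (histMat T xd 0) (Matrix.fromRows (histMat T ud 0) (histMat T yd 1))
    with hMdef
  set Ψ := psiMap (s := s) P A1 R B1 B2 F1 F2 C1 C2 with hPsiDef
  -- column identity
  have hwv : ∀ (k : Fin T) (j : ℕ), j ≤ s →
      wv s (fun i => W i k) j = Sum.elim (ud ((k : ℕ) + j)) (etad ((k : ℕ) + j)) := by
    intro k j hj
    funext l
    have hj1 : j < s + 1 := by omega
    simp only [wv, csel, dif_pos hj1]
    rfl
  have hcol : ∀ k : Fin T,
      (fun i => M i k) = psiFun P A1 R B1 B2 F1 F2 C1 C2 (fun i => W i k) := by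
    intro k
    have hkT : (k : ℕ) ≤ T := le_of_lt k.isLt
    have hkT' : (k : ℕ) + 1 ≤ T := k.isLt
    have hwz : (fun i => (fun i => W i k) (Sum.inl i)) = z1d (k : ℕ) := rfl
    have hsum0 : ∑ j ∈ Finset.range s, R ^ j *ᵥ Xv B2 F2 (wv s (fun i => W i k) j)
        = ∑ j ∈ Finset.range s,
            (R ^ j *ᵥ (B2 *ᵥ ud ((k : ℕ) + j) + F2 *ᵥ etad ((k : ℕ) + j))) := by
      refine Finset.sum_congr rfl fun j hj => ?_
      rw [hwv k j (le_of_lt (Finset.mem_range.mp hj)), Xv_elim]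
    have hsum1 : ∑ j ∈ Finset.range s, R ^ j *ᵥ Xv B2 F2 (wv s (fun i => W i k) (j + 1))
        = ∑ j ∈ Finset.range s,
            (R ^ j *ᵥ (B2 *ᵥ ud (((k : ℕ) + 1) + j) + F2 *ᵥ etad (((k : ℕ) + 1) + j))) := by
      refine Finset.sum_congr rfl fun j hj => ?_
      have hj' : j + 1 ≤ s := Finset.mem_range.mp hj
      rw [hwv k (j + 1) hj', Xv_elim]
      have harith : (k : ℕ) + (j + 1) = ((k : ℕ) + 1) + j := by omega
      rw [harith]
    funext x
    rcases x with i | (i | i)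
    · show xd ((k : ℕ) + 0) i = psiX P R B2 F2 (fun i => W i k) i
      unfold psiX
      rw [hwz, hsum0]
      have hz2k : -(∑ j ∈ Finset.range s,
          (R ^ j *ᵥ (B2 *ᵥ ud ((k : ℕ) + j) + F2 *ᵥ etad ((k : ℕ) + j)))) = z2d (k : ℕ) :=
        (hz2 (k : ℕ) hkT).symm
      rw [hz2k, Nat.add_zero]
      have h7 : xd (k : ℕ) = P *ᵥ glue (z1d (k : ℕ)) (z2d (k : ℕ)) := hxd (k : ℕ) hkT
      rw [h7]
    · show ud ((k : ℕ) + 0) i = psiU s (fun i => W i k) i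
      unfold psiU
      rw [hwv k 0 (by omega)]
      rfl
    · show yd ((k : ℕ) + 1) i = psiY A1 R B1 B2 F1 F2 C1 C2 (fun i => W i k) i
      unfold psiY psiU
      rw [hwz, hsum1]
      have hz2k1 : -(∑ j ∈ Finset.range s,
          (R ^ j *ᵥ (B2 *ᵥ ud (((k : ℕ) + 1) + j) + F2 *ᵥ etad (((k : ℕ) + 1) + j))))
          = z2d ((k : ℕ) + 1) := (hz2 ((k : ℕ) + 1) hkT').symm
      rw [hz2k1]
      have hu : (fun i => wv s (fun i => W i k) 0 (Sum.inl i)) = ud (k : ℕ) := by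
        rw [hwv k 0 (by omega)]
        funext i
        simp
      have he : (fun i => wv s (fun i => W i k) 0 (Sum.inr i)) = etad (k : ℕ) := by
        rw [hwv k 0 (by omega)]
        funext i
        simp
      rw [hu, he, ← hz1 (k : ℕ) k.isLt]
      have h8 : C1 *ᵥ z1d ((k : ℕ) + 1) + C2 *ᵥ z2d ((k : ℕ) + 1)
          = C *ᵥ (P *ᵥ glue (z1d ((k : ℕ) + 1)) (z2d ((k : ℕ) + 1))) := (hCv _ _).symm
      rw [h8]
      have h9 : P *ᵥ glue (z1d ((k : ℕ) + 1)) (z2d ((k : ℕ) + 1)) = xd ((k : ℕ) + 1) :=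
        (hxd ((k : ℕ) + 1) hkT').symm
      rw [h9, ← hyd ((k : ℕ) + 1) hkT']
  -- M factors through Ψ
  have hMW : M.mulVecLin = Ψ.comp W.mulVecLin := by
    apply (Pi.basisFun ℝ (Fin T)).ext
    intro k
    rw [Pi.basisFun_apply]
    show M *ᵥ Pi.single k 1 = Ψ (W *ᵥ Pi.single k 1)
    rw [mulVec_single_one, mulVec_single_one]
    have h11 : W.col k = (fun i => W i k) := rfl
    have h12 : M.col k = (fun i => M i k) := rfl
    rw [h11, h12, hcol k]
    rfl
  have hrangeM : LinearMap.range M.mulVecLin = LinearMap.range Ψ := by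
    rw [hMW, LinearMap.range_comp]
    have hWtop : LinearMap.range W.mulVecLin = ⊤ := by
      apply Submodule.eq_top_of_finrank_eq
      have h12 : finrank ℝ ↥(LinearMap.range W.mulVecLin) = W.rank := rfl
      rw [h12, hPE, Module.finrank_pi]
      simp
    rw [hWtop, Submodule.map_top]
  have hrankM : M.rank = finrank ℝ ↥(LinearMap.range Ψ) :=
    congrArg (fun (Sub : Submodule ℝ (Fin (n1 + n2) ⊕ (Fin m ⊕ Fin p) → ℝ)) =>
      finrank ℝ ↥Sub) hrangeM
  -- rank-nullity for Ψ
  have hΨrn : finrank ℝ ↥(LinearMap.range Ψ) + finrank ℝ ↥(LinearMap.ker Ψ)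
      = n1 + (s + 1) * (m + q) := by
    have h13 := Ψ.finrank_range_add_finrank_ker
    rw [Module.finrank_pi] at h13
    simpa using h13
  -- fast controllability matrix
  have hQrank : (Qm (s := s) R B2 F2).rank = n2 := hQ
  have hQtop : LinearMap.range (Qm (s := s) R B2 F2).mulVecLin = ⊤ := by
    apply Submodule.eq_top_of_finrank_eq
    have h14 : finrank ℝ ↥(LinearMap.range (Qm (s := s) R B2 F2).mulVecLin)
        = (Qm (s := s) R B2 F2).rank := rfl
    rw [h14, hQrank, Module.finrank_pi]
    simp
  have hQsurj : Function.Surjective (Qm (s := s) R B2 F2).mulVecLin :=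
    LinearMap.range_eq_top.mp hQtop
  have hQrn : n2 + finrank ℝ ↥(LinearMap.ker (Qm (s := s) R B2 F2).mulVecLin) = s * (m + q) := by
    have h15 := (Qm (s := s) R B2 F2).mulVecLin.finrank_range_add_finrank_ker
    have h16 : finrank ℝ ↥(LinearMap.range (Qm (s := s) R B2 F2).mulVecLin) = n2 := hQrank
    rw [h16, Module.finrank_pi] at h15
    simpa using h15
  -- canonical kernel
  set K0 : Submodule ℝ ((Fin n1 ⊕ (Fin (s + 1) × (Fin m ⊕ Fin q))) → ℝ) :=
    Submodule.map (phiMap n1) (LinearMap.ker (Qm (s := s) R B2 F2).mulVecLin) with hK0def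
  have hK0dim : finrank ℝ ↥K0 = finrank ℝ ↥(LinearMap.ker (Qm (s := s) R B2 F2).mulVecLin) :=
    (Submodule.equivMapOfInjective (phiMap n1) phiFun_injective _).finrank_eq.symm
  have hK0le : K0 ≤ LinearMap.ker Ψ := by
    rintro w ⟨c, hc, rfl⟩
    have hc0 : Qm (s := s) R B2 F2 *ᵥ c = 0 := by
      have h40 := LinearMap.mem_ker.mp hc
      rwa [Matrix.mulVecLin_apply] at h40
    refine LinearMap.mem_ker.mpr ?_
    show psiFun P A1 R B1 B2 F1 F2 C1 C2 (phiFun n1 c) = 0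
    rw [psi_phi hs P A1 R hR B1 B2 F1 F2 C1 C2 c, hc0]
    rw [mulVec_zero, neg_zero, mulVec_zero, glue_zero, mulVec_zero]
    funext x
    rcases x with i | (i | i) <;> rfl
  -- under Φ the kernel of Ψ is exactly K0
  have hkerK0 : Φ → LinearMap.ker Ψ = K0 := by
    intro hPhi
    rw [hPhiDef] at hPhi
    refine le_antisymm ?_ hK0le
    intro w hw
    have hw' : psiFun P A1 R B1 B2 F1 F2 C1 C2 w = 0 := LinearMap.mem_ker.mp hw
    have hX : psiX P R B2 F2 w = 0 := funext fun i => congrFun hw' (Sum.inl i)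
    have hU : psiU s w = 0 := funext fun i => congrFun hw' (Sum.inr (Sum.inl i))
    have hY : psiY A1 R B1 B2 F1 F2 C1 C2 w = 0 :=
      funext fun i => congrFun hw' (Sum.inr (Sum.inr i))
    unfold psiX at hX
    obtain ⟨hz1w, hz2w⟩ := hPglue _ _ hX
    have hSig0 : ∑ j ∈ Finset.range s, R ^ j *ᵥ Xv B2 F2 (wv s w j) = 0 := neg_eq_zero.mp hz2w
    have hu0 : (fun i => wv s w 0 (Sum.inl i)) = 0 := hU
    set e0 : Fin q → ℝ := fun i => wv s w 0 (Sum.inr i) with he0def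
    set Sig1 : Fin n2 → ℝ :=
      ∑ j ∈ Finset.range s, R ^ j *ᵥ Xv B2 F2 (wv s w (j + 1)) with hSig1def
    have hXv0 : Xv B2 F2 (wv s w 0) = F2 *ᵥ e0 := by
      show B2 *ᵥ (fun i => wv s w 0 (Sum.inl i)) + F2 *ᵥ (fun i => wv s w 0 (Sum.inr i))
        = F2 *ᵥ e0
      rw [hu0, mulVec_zero, zero_add, ← he0def]
    have hstar : F2 *ᵥ e0 + R *ᵥ Sig1 = 0 := by
      have hm := master hs R hR (fun j => Xv B2 F2 (wv s w j))
      rw [hSig0, hXv0, ← hSig1def] at hm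
      exact hm.symm
    unfold psiY at hY
    rw [hz1w, hU, ← he0def, ← hSig1def] at hY
    rw [mulVec_zero, mulVec_zero, zero_add, zero_add] at hY
    obtain ⟨hFe, hbz, hez⟩ := hPhi (F1 *ᵥ e0) (-Sig1) (-e0)
      (by rw [mulVec_neg]; exact add_neg_cancel _)
      (by rw [mulVec_neg, mulVec_neg, ← neg_add, add_comm (R *ᵥ Sig1) (F2 *ᵥ e0), hstar,
        neg_zero])
      hY
    have hSig1z : Sig1 = 0 := neg_eq_zero.mp hbz
    have he0z : e0 = 0 := neg_eq_zero.mp hez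
    set c : (Fin s × (Fin m ⊕ Fin q)) → ℝ := fun jl => w (Sum.inr (jl.1.succ, jl.2))
      with hcdef
    have hcsel : ∀ j : ℕ, csel c j = wv s w (j + 1) := by
      intro j
      funext l
      by_cases hj : j < s
      · have hj1 : j + 1 < s + 1 := by omega
        simp only [csel, wv, dif_pos hj, dif_pos hj1, hcdef]
        have h18 : (⟨j, hj⟩ : Fin s).succ = (⟨j + 1, hj1⟩ : Fin (s + 1)) := by
          ext; simp
        rw [h18]
      · have hj1 : ¬ (j + 1 < s + 1) := by omega
        simp only [csel, wv, dif_neg hj, dif_neg hj1]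
    have hQc : Qm (s := s) R B2 F2 *ᵥ c = 0 := by
      rw [Qm_mulVec]
      have h19 : ∑ j ∈ Finset.range s, R ^ j *ᵥ Xv B2 F2 (csel c j) = Sig1 := by
        rw [hSig1def]
        exact Finset.sum_congr rfl fun j _ => by rw [hcsel j]
      rw [h19, hSig1z]
    have hwphi : w = phiFun n1 c := by
      funext x
      rcases x with i | ⟨j, l⟩
      · exact congrFun hz1w i
      · induction j using Fin.cases with
        | zero =>
          have hzero : phiFun (s := s) (m := m) (q := q) n1 c (Sum.inr (0, l)) = 0 :=
            phi_apply_zero c l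
          rw [hzero]
          have h0 : (0 : ℕ) < s + 1 := Nat.succ_pos s
          have hmk : (⟨0, h0⟩ : Fin (s + 1)) = 0 := Fin.ext (by simp)
          have h20 : w (Sum.inr (0, l)) = wv s w 0 l := by
            simp only [wv, csel, dif_pos h0, hmk]
          rw [h20]
          rcases l with i | i
          · exact congrFun hu0 i
          · exact congrFun he0z i
        | succ j =>
          rw [phi_apply_succ]
    rw [hwphi]
    exact ⟨c, LinearMap.mem_ker.mpr (by rw [Matrix.mulVecLin_apply]; exact hQc), rfl⟩
  -- arithmetic bookkeeping
  set D1 : ℕ := s * (m + q) with hD1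
  set D2 : ℕ := (s + 1) * (m + q) with hD2
  have hmul : D2 = D1 + (m + q) := by rw [hD1, hD2]; ring
  constructor
  · -- Φ → rank M = target
    intro hPhi
    have hkeq := hkerK0 hPhi
    rw [hrankM]
    have h23 : finrank ℝ ↥(LinearMap.ker Ψ)
        = finrank ℝ ↥(LinearMap.ker (Qm (s := s) R B2 F2).mulVecLin) :=
      (congrArg (fun (Sub : Submodule ℝ (Fin n1 ⊕ (Fin (s + 1) × (Fin m ⊕ Fin q)) → ℝ)) =>
        finrank ℝ ↥Sub) hkeq).trans hK0dim
    omega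
  · -- rank M = target → Φ
    intro hrank
    by_contra hPhin
    rw [hPhiDef] at hPhin
    push_neg at hPhin
    obtain ⟨a, b, η, h1, h2, h3, hne⟩ := hPhin
    obtain ⟨c, hc⟩ := hQsurj (-b)
    rw [Matrix.mulVecLin_apply] at hc
    set w : (Fin n1 ⊕ (Fin (s + 1) × (Fin m ⊕ Fin q))) → ℝ :=
      phiFun n1 c + w0Fun n1 s m η with hwdef
    have hwker : w ∈ LinearMap.ker Ψ := by
      refine LinearMap.mem_ker.mpr ?_
      have h21 : Ψ w = psiFun P A1 R B1 B2 F1 F2 C1 C2 (phiFun n1 c)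
          + psiFun P A1 R B1 B2 F1 F2 C1 C2 (w0Fun n1 s m η) := by
        rw [hwdef]
        exact Ψ.map_add _ _
      rw [h21, psi_phi hs P A1 R hR B1 B2 F1 F2 C1 C2 c,
        psi_w0 hs P A1 R hR B1 B2 F1 F2 C1 C2 η, hc]
      funext x
      rcases x with i | (i | i)
      · show (P *ᵥ glue 0 (-(R *ᵥ (-b)))) i + (P *ᵥ glue 0 (F2 *ᵥ η)) i = 0
        have h22 : P *ᵥ glue 0 (-(R *ᵥ (-b))) + P *ᵥ glue 0 (F2 *ᵥ η) = 0 := by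
          rw [← mulVec_add, ← glue_add, add_zero, mulVec_neg, neg_neg, h2, glue_zero,
            mulVec_zero]
        exact congrFun h22 i
      · show (0 : ℝ) + 0 = 0
        simp
      · show (C2 *ᵥ (-(-b))) i + (-(C1 *ᵥ (F1 *ᵥ η))) i = 0
        have hFa : F1 *ᵥ η = -a := eq_neg_of_add_eq_zero_right h1
        have h22 : C2 *ᵥ (-(-b)) + -(C1 *ᵥ (F1 *ᵥ η)) = 0 := by
          rw [neg_neg, hFa, mulVec_neg, neg_neg, add_comm]
          exact h3
        exact congrFun h22 i
    have hwK0 : w ∉ K0 := by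
      rintro ⟨c', hc', hcw⟩
      have heta : η = 0 := by
        funext l
        have h25 : phiFun (s := s) (m := m) (q := q) n1 c' (Sum.inr (0, Sum.inr l)) = 0 :=
          phi_apply_zero c' (Sum.inr l)
        have h26 : w (Sum.inr (0, Sum.inr l)) = -η l := by
          rw [hwdef]
          show phiFun n1 c (Sum.inr (0, Sum.inr l))
            + w0Fun n1 s m η (Sum.inr (0, Sum.inr l)) = -η l
          have h27 : phiFun (s := s) (m := m) (q := q) n1 c (Sum.inr (0, Sum.inr l)) = 0 :=
            phi_apply_zero c (Sum.inr l)
          rw [h27, zero_add]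
          show (if (0 : Fin (s + 1)) = 0 then Sum.elim (0 : Fin m → ℝ) (-η) (Sum.inr l)
            else 0) = -η l
          rw [if_pos rfl]
          rfl
        have h28 := congrFun hcw (Sum.inr (0, Sum.inr l))
        rw [h26] at h28
        have h29 : (0 : ℝ) = -η l := by rw [← h25]; exact h28
        show η l = (0 : ℝ)
        linarith [h29]
      have hw0z : w0Fun n1 s m η = 0 := by
        rw [heta]
        funext x
        rcases x with i | jl
        · rfl
        · show (if jl.1 = 0 then Sum.elim (0 : Fin m → ℝ) (-(0 : Fin q → ℝ)) jl.2 else 0)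
            = 0
          split
          · rcases jl.2 with i | i <;> simp
          · rfl
      have hwphic : w = phiFun n1 c := by rw [hwdef, hw0z, add_zero]
      have hcc : c = c' := by
        apply phiFun_injective
        rw [← hwphic]
        exact hcw.symm
      have hc'0 : Qm (s := s) R B2 F2 *ᵥ c = 0 := by
        have h41 := LinearMap.mem_ker.mp hc'
        rw [Matrix.mulVecLin_apply] at h41
        rw [hcc]
        exact h41
      have hb0 : b = 0 := by
        have h30 := hc.symm.trans hc'0
        rwa [neg_eq_zero] at h30
      have ha0 : a = 0 := by
        have h31 := h1
        rw [heta, mulVec_zero, add_zero] at h31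
        exact h31
      exact hne ha0 hb0 heta
    have hlt : K0 < LinearMap.ker Ψ := lt_of_le_of_ne hK0le (fun hEq => hwK0 (hEq ▸ hwker))
    have hltdim : finrank ℝ ↥K0 < finrank ℝ ↥(LinearMap.ker Ψ) :=
      Submodule.finrank_lt_finrank_of_lt hlt
    rw [hrankM] at hrank
    omega
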